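/- Let X be a real random variable with absolutely continuous and strictly increasing cdf F_X on ℝ, and let T be a volatility proxy transformation with change point μ_T and profile g_T. Let U = F_X(X) and V = F_{T(X)}(T(X)), where F_{T(X)} is the cdf of T(X). Then V = 𝒱(U) almost surely, where 𝒱(u) = F_X(μ_T + g_T(μ_T − F_X⁻¹(u))) − u for u ≤ F_X(μ_T) and 𝒱(u) = u − F_X(μ_T − g_T⁻¹(F_X⁻¹(u) − μ_T)) for u > F_X(μ_T). -/

import Mathlib

/-!
STATEMENT 6: for `X` with absolutely continuous strictly increasing cdf `F_X` and
a volatility proxy transformation `T` with change point `μ_T` and profile `g_T`,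
the PIT variables `U = F_X(X)` and `V = F_{T(X)}(T(X))` satisfy `V = 𝒱(U)` a.s.,
where `𝒱(u) = F_X(μ_T + g_T(μ_T - F_X⁻¹(u))) - u` for `u ≤ F_X(μ_T)` and
`𝒱(u) = u - F_X(μ_T - g_T⁻¹(F_X⁻¹(u) - μ_T))` for `u > F_X(μ_T)`.
-/

open Set MeasureTheory

theorem stmt_6 {Ω : Type*} [MeasurableSpace Ω] (P : Measure Ω) [IsProbabilityMeasure P]
    (X : Ω → ℝ) (hX : Measurable X)
    -- `F` is the cdf of `X`; it is absolutely continuous and strictly increasing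
    (F : ℝ → ℝ) (hF : ∀ x, F x = (P {ω | X ω ≤ x}).toReal)
    (habs : Measure.map X P ≪ volume) (hFm : StrictMono F)
    -- `Finv` inverts `F` on `(0,1)`
    (Finv : ℝ → ℝ) (hFinv : ∀ u ∈ Ioo (0:ℝ) 1, F (Finv u) = u)
    -- volatility proxy transformation `T` with change point `μT`
    (μT : ℝ) (T₁ T₂ : ℝ → ℝ)
    (hT₁m : StrictMonoOn T₁ (Ici 0)) (hT₂m : StrictMonoOn T₂ (Ici 0))
    (hT₁c : ContinuousOn T₁ (Ici 0)) (hT₂c : ContinuousOn T₂ (Ici 0))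
    (hT₁d : DifferentiableOn ℝ T₁ (Ici 0)) (hT₂d : DifferentiableOn ℝ T₂ (Ici 0))
    (h00 : T₁ 0 = T₂ 0)
    (T : ℝ → ℝ) (hT : ∀ x, T x = if x ≤ μT then T₁ (μT - x) else T₂ (x - μT))
    -- profile function `g = T₂⁻¹ ∘ T₁` on `[0,∞)`, with inverse `ginv = T₁⁻¹ ∘ T₂`
    (g : ℝ → ℝ) (hg : ∀ x ∈ Ici (0:ℝ), 0 ≤ g x ∧ T₂ (g x) = T₁ x)
    (ginv : ℝ → ℝ) (hginv : ∀ x ∈ Ici (0:ℝ), ginv (g x) = x)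
    (hginv' : ∀ y ∈ Ici (0:ℝ), 0 ≤ ginv y ∧ g (ginv y) = y)
    -- `G` is the cdf of `T(X)`
    (G : ℝ → ℝ) (hG : ∀ t, G t = (P {ω | T (X ω) ≤ t}).toReal) :
    -- `V = 𝒱(U)` almost surely
    ∀ᵐ ω ∂P, G (T (X ω)) =
      if F (X ω) ≤ F μT then F (μT + g (μT - Finv (F (X ω)))) - F (X ω)
      else F (X ω) - F (μT - ginv (Finv (F (X ω)) - μT)) := by
  -- F takes values in (0,1)
  have hFx01 : ∀ x : ℝ, F x ∈ Ioo (0:ℝ) 1 := by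
    intro x
    constructor
    · have h1 : F (x-1) < F x := hFm (by linarith)
      have h0 : 0 ≤ F (x-1) := by rw [hF]; exact ENNReal.toReal_nonneg
      linarith
    · have h1 : F x < F (x+1) := hFm (by linarith)
      have h2 : F (x+1) ≤ 1 := by
        rw [hF]
        have hle : P {ω | X ω ≤ x+1} ≤ 1 := prob_le_one
        have := ENNReal.toReal_mono ENNReal.one_ne_top hle
        simpa using this
      linarith
  have hFinvF : ∀ x : ℝ, Finv (F x) = x := fun x =>
    hFm.injective (hFinv _ (hFx01 x))
  -- no atoms
  have noatom : ∀ c : ℝ, P {ω | X ω = c} = 0 := by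
    intro c
    have h0 : Measure.map X P {c} = 0 := habs (measure_singleton c)
    rw [Measure.map_apply hX (measurableSet_singleton c)] at h0
    exact h0
  -- key interval formula
  have key : ∀ l r : ℝ, l ≤ r →
      (P {ω | l ≤ X ω ∧ X ω ≤ r}).toReal = F r - F l := by
    intro l r hlr
    have hmid : NullMeasurableSet {ω | l ≤ X ω ∧ X ω ≤ r} P := by
      have : {ω | l ≤ X ω ∧ X ω ≤ r} = X ⁻¹' Icc l r := rfl
      exact (hX (measurableSet_Icc : MeasurableSet (Icc l r))).nullMeasurableSet.congr (by rw [this]; exact Filter.EventuallyEq.rfl)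
    have hdisj : MeasureTheory.AEDisjoint P {ω | X ω ≤ l} {ω | l ≤ X ω ∧ X ω ≤ r} := by
      apply measure_mono_null _ (noatom l)
      rintro ω ⟨h1, h2, _⟩
      exact le_antisymm h1 h2
    have hunion : {ω | X ω ≤ r} = {ω | X ω ≤ l} ∪ {ω | l ≤ X ω ∧ X ω ≤ r} := by
      ext ω
      simp only [mem_setOf_eq, mem_union]
      constructor
      · intro h
        rcases le_total (X ω) l with h' | h'
        · exact Or.inl h'
        · exact Or.inr ⟨h', h⟩
      · rintro (h | ⟨_, h⟩)
        · linarith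
        · exact h
    have hsum : P {ω | X ω ≤ r} = P {ω | X ω ≤ l} + P {ω | l ≤ X ω ∧ X ω ≤ r} := by
      rw [hunion]
      exact measure_union₀ hmid hdisj
    have hFr : F r = F l + (P {ω | l ≤ X ω ∧ X ω ≤ r}).toReal := by
      rw [hF, hF, hsum, ENNReal.toReal_add (measure_ne_top _ _) (measure_ne_top _ _)]
    linarith
  -- properties of g
  have hga : ∀ a : ℝ, 0 ≤ a → 0 ≤ g a := fun a ha => (hg a (mem_Ici.mpr ha)).1
  have hgT : ∀ a : ℝ, 0 ≤ a → T₂ (g a) = T₁ a := fun a ha => (hg a (mem_Ici.mpr ha)).2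
  have hgle : ∀ a : ℝ, 0 ≤ a → ∀ b : ℝ, 0 ≤ b → (g a ≤ g b ↔ a ≤ b) := by
    intro a ha b hb
    rw [← hT₂m.le_iff_le (mem_Ici.mpr (hga a ha)) (mem_Ici.mpr (hga b hb)),
      hgT a ha, hgT b hb]
    exact hT₁m.le_iff_le (mem_Ici.mpr ha) (mem_Ici.mpr hb)
  apply ae_of_all
  intro ω
  rw [hFinvF]
  set x := X ω with hx
  by_cases hxμ : x ≤ μT
  · rw [if_pos (hFm.le_iff_le.mpr hxμ)]
    set a := μT - x with ha'
    have ha : 0 ≤ a := by linarith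
    have hTx : T x = T₁ a := by rw [hT x, if_pos hxμ]
    rw [hTx, hG]
    have hset : {ω' | T (X ω') ≤ T₁ a} = {ω' | x ≤ X ω' ∧ X ω' ≤ μT + g a} := by
      ext ω'
      simp only [mem_setOf_eq, hT (X ω')]
      by_cases hy : X ω' ≤ μT
      · rw [if_pos hy]
        have h1 : T₁ (μT - X ω') ≤ T₁ a ↔ μT - X ω' ≤ a :=
          hT₁m.le_iff_le (mem_Ici.mpr (by linarith)) (mem_Ici.mpr ha)
        constructor
        · intro h
          have := h1.mp h
          exact ⟨by linarith, by linarith [hga a ha]⟩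
        · rintro ⟨h2, _⟩
          exact h1.mpr (by linarith)
      · rw [if_neg hy]
        push_neg at hy
        have h1 : T₂ (X ω' - μT) ≤ T₁ a ↔ X ω' - μT ≤ g a := by
          rw [← hgT a ha]
          exact hT₂m.le_iff_le (mem_Ici.mpr (by linarith)) (mem_Ici.mpr (hga a ha))
        constructor
        · intro h
          exact ⟨by linarith, by linarith [h1.mp h]⟩
        · rintro ⟨_, h2⟩
          exact h1.mpr (by linarith)
    rw [hset, key x (μT + g a) (by linarith [hga a ha])]
  · rw [if_neg (fun h => hxμ (hFm.le_iff_le.mp h))]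
    push_neg at hxμ
    set b := x - μT with hb'
    have hb : 0 ≤ b := by linarith
    have hgib : 0 ≤ ginv b := (hginv' b (mem_Ici.mpr hb)).1
    have hggib : g (ginv b) = b := (hginv' b (mem_Ici.mpr hb)).2
    have hTx : T x = T₂ b := by rw [hT x, if_neg (not_le.mpr hxμ)]
    rw [hTx, hG]
    have hset : {ω' | T (X ω') ≤ T₂ b} = {ω' | μT - ginv b ≤ X ω' ∧ X ω' ≤ x} := by
      ext ω'
      simp only [mem_setOf_eq, hT (X ω')]
      by_cases hy : X ω' ≤ μT
      · rw [if_pos hy]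
        have h2 := hgle (μT - X ω') (by linarith) (ginv b) hgib
        rw [hggib] at h2
        have h1 : T₁ (μT - X ω') ≤ T₂ b ↔ μT - X ω' ≤ ginv b := by
          rw [← hgT (μT - X ω') (by linarith),
            hT₂m.le_iff_le (mem_Ici.mpr (hga _ (by linarith))) (mem_Ici.mpr hb)]
          exact h2
        constructor
        · intro h
          exact ⟨by linarith [h1.mp h], by linarith⟩
        · rintro ⟨h3, _⟩
          exact h1.mpr (by linarith)
      · rw [if_neg hy]
        push_neg at hy
        have h1 : T₂ (X ω' - μT) ≤ T₂ b ↔ X ω' - μT ≤ b :=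
          hT₂m.le_iff_le (mem_Ici.mpr (by linarith)) (mem_Ici.mpr hb)
        constructor
        · intro h
          exact ⟨by linarith, by linarith [h1.mp h]⟩
        · rintro ⟨_, h3⟩
          exact h1.mpr (by linarith)
    rw [hset, key (μT - ginv b) x (by linarith)]
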